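/- Let μ be an invariant measure of a cellular automaton with totally asymmetric noise (e.g., Toom's or Stavskaya's model) satisfying the lower bound μ(+_{C_n}) ≥ exp(−c n^{d−1}) for all n, where +_{C_n} is the event of seeing the all-plus configuration in the cube C_n. If μ is translation invariant and μ ≠ δ_+, then μ does not satisfy GCB(C) for any C > 0. -/

import Mathlib

open MeasureTheory Filter
open scoped ENNReal

/-- Spatial configurations: spins (encoded as `Bool`, `true` = +1) indexed by `ι`. -/
abbrev Config (ι : Type*) := ι → Bool

/-- The lattice `ℤ^d`. -/
abbrev Site (d : ℕ) := Fin d → ℤ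

/-- Spin value `±1` of a Boolean. -/
noncomputable def spin (b : Bool) : ℝ := if b then 1 else -1

/-- Flip the spin of `σ` at site `x`. -/
def flipAt {ι : Type*} [DecidableEq ι] (σ : Config ι) (x : ι) : Config ι :=
  Function.update σ x (!σ x)

/-- Oscillation `δ_x f = sup_σ (f(σ^{(x)}) - f(σ))`. -/
noncomputable def osc {ι : Type*} [DecidableEq ι] (f : Config ι → ℝ) (x : ι) : ℝ :=
  ⨆ σ : Config ι, (f (flipAt σ x) - f σ)

/-- `‖δ f‖₂²  = ∑_x (δ_x f)²`. -/
noncomputable def oscNormSq {ι : Type*} [DecidableEq ι] (f : Config ι → ℝ) : ℝ :=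
  ∑' x : ι, osc f x ^ 2

/-- `‖δ f‖₁ = ∑_x δ_x f`. -/
noncomputable def oscNorm1 {ι : Type*} [DecidableEq ι] (f : Config ι → ℝ) : ℝ :=
  ∑' x : ι, osc f x

/-- `f` depends only on the coordinates in `Λ` (i.e. `f` is `F_Λ`-measurable). -/
def LocalOn {ι : Type*} (Λ : Finset ι) (f : Config ι → ℝ) : Prop :=
  ∀ σ τ : Config ι, (∀ x ∈ Λ, σ x = τ x) → f σ = f τ

/-- `f` is a local function. -/
def IsLocal {ι : Type*} (f : Config ι → ℝ) : Prop := ∃ Λ : Finset ι, LocalOn Λ f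

/-- Gaussian concentration bound with constant `C`:
`log ∫ e^{f - ∫ f dμ} dμ ≤ (C/2) ‖δ f‖₂²` for every local function `f`. -/
def GCB {ι : Type*} [DecidableEq ι] (μ : Measure (Config ι)) (C : ℝ) : Prop :=
  ∀ f : Config ι → ℝ, IsLocal f →
    Real.log (∫ σ, Real.exp (f σ - ∫ τ, f τ ∂μ) ∂μ) ≤ C / 2 * oscNormSq f

/-- The cylinder set of configurations agreeing with `b` on `Λ`. -/
def cyl {ι : Type*} (Λ : Finset ι) (b : ι → Bool) : Set (Config ι) :=
  {σ | ∀ x ∈ Λ, σ x = b x}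

/-- `h_x(η) = ∑_{A ⋐ ℤ^d} r_A η_{A+x}`. -/
noncomputable def hfun {d : ℕ} (r : Finset (Site d) → ℝ) (x : Site d)
    (η : Config (Site d)) : ℝ :=
  ∑' A : Finset (Site d), r A * ∏ y ∈ A, spin (η (y + x))

/-- `p_x(η) = ½ (1 + η_x h_x(η))`, the probability that the new spin at `x` is `+1`. -/
noncomputable def pPlus {d : ℕ} (r : Finset (Site d) → ℝ) (x : Site d)
    (η : Config (Site d)) : ℝ :=
  (1 + spin (η x) * hfun r x η) / 2

/-- A (translation-invariant) probabilistic cellular automaton on `{-1,+1}^{ℤ^d}`: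
given the configuration `η`, the next configuration is distributed as the product
measure with marginals `p_x(η)` at site `x`. -/
structure PCA (d : ℕ) where
  r : Finset (Site d) → ℝ
  summable_r : Summable fun A => |r A|
  hbound : ∀ (x : Site d) (η : Config (Site d)), |hfun r x η| ≤ 1
  ker : Config (Site d) → Measure (Config (Site d))
  ker_meas : Measurable ker
  ker_prob : ∀ η, IsProbabilityMeasure (ker η)
  ker_marginal : ∀ (η : Config (Site d)) (Λ : Finset (Site d)) (b : Site d → Bool),
    ker η (cyl Λ b) =
      ∏ x ∈ Λ, ENNReal.ofReal (if b x then pPlus r x η else 1 - pPlus r x η)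

/-- The transition operator `P` acting on functions: `Pf(η) = ∫ f(σ) p(dσ|η)`. -/
noncomputable def Pop {d : ℕ} (P : PCA d) (f : Config (Site d) → ℝ)
    (η : Config (Site d)) : ℝ :=
  ∫ σ, f σ ∂(P.ker η)

/-- The transition operator acting on measures: `μP`. -/
noncomputable def Pmeas {d : ℕ} (P : PCA d) (μ : Measure (Config (Site d))) :
    Measure (Config (Site d)) :=
  μ.bind P.ker

/-- `ψ(x) = ∑_{A ∋ x} |r_A|`. -/
noncomputable def psi {d : ℕ} (P : PCA d) (x : Site d) : ℝ :=
  ∑' A : Finset (Site d), if x ∈ A then |P.r A| else 0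

/-- `‖ψ‖₁ = ∑_{A ⋐ ℤ^d} |A| |r_A|`. -/
noncomputable def psiNorm1 {d : ℕ} (P : PCA d) : ℝ :=
  ∑' A : Finset (Site d), (A.card : ℝ) * |P.r A|

/-- The contraction coefficient `κ = ‖ψ‖₁² = (∑_A |A||r_A|)²`. -/
noncomputable def kappa {d : ℕ} (P : PCA d) : ℝ := psiNorm1 P ^ 2

/-- The shift (translation) of a configuration by `a ∈ ℤ^d`. -/
def shift {d : ℕ} (a : Site d) (σ : Config (Site d)) : Config (Site d) :=
  fun x => σ (x + a)

/-- Translation invariance of a measure on `{-1,+1}^{ℤ^d}`. -/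
def TransInv {d : ℕ} (μ : Measure (Config (Site d))) : Prop :=
  ∀ a : Site d, μ.map (shift a) = μ

/-- The cube `C_n = [-n,n]^d ∩ ℤ^d` as a finite set of sites. -/
noncomputable def cube (d n : ℕ) : Finset (Site d) :=
  Fintype.piFinset fun _ : Fin d => Finset.Icc (-(n : ℤ)) (n : ℤ)


section AuxLemmas
variable {ι : Type*} [DecidableEq ι]

/-- count of `true` spins in `Λ`. -/
noncomputable def cnt (Λ : Finset ι) (σ : Config ι) : ℝ :=
  ∑ y ∈ Λ, (if σ y then (1:ℝ) else 0)

lemma cnt_flip (Λ : Finset ι) (σ : Config ι) (x : ι) :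
    cnt Λ (flipAt σ x) - cnt Λ σ =
      if x ∈ Λ then (if σ x then (-1:ℝ) else 1) else 0 := by
  by_cases hx : x ∈ Λ
  · rw [if_pos hx]
    unfold cnt
    rw [← Finset.add_sum_erase _ _ hx, ← Finset.add_sum_erase _ _ hx]
    have h1 : ∀ y ∈ Λ.erase x, (if flipAt σ x y then (1:ℝ) else 0) = (if σ y then (1:ℝ) else 0) := by
      intro y hy
      have : flipAt σ x y = σ y := Function.update_of_ne (Finset.ne_of_mem_erase hy) _ _
      rw [this]
    rw [Finset.sum_congr rfl h1]
    have h2 : flipAt σ x x = !σ x := Function.update_self _ _ _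
    rw [h2]
    cases h : σ x <;> simp
  · rw [if_neg hx]
    unfold cnt
    have h1 : ∀ y ∈ Λ, (if flipAt σ x y then (1:ℝ) else 0) = (if σ y then (1:ℝ) else 0) := by
      intro y hy
      have : flipAt σ x y = σ y := Function.update_of_ne (by rintro rfl; exact hx hy) _ _
      rw [this]
    rw [Finset.sum_congr rfl h1]
    ring

lemma osc_cnt (lam : ℝ) (hlam : 0 ≤ lam) (Λ : Finset ι) (x : ι) :
    osc (fun σ => lam * cnt Λ σ) x = if x ∈ Λ then lam else 0 := by
  unfold osc
  have key : ∀ σ : Config ι, lam * cnt Λ (flipAt σ x) - lam * cnt Λ σ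
      = lam * (if x ∈ Λ then (if σ x then (-1:ℝ) else 1) else 0) := by
    intro σ; rw [← mul_sub, cnt_flip]
  by_cases hx : x ∈ Λ
  · rw [if_pos hx]
    apply le_antisymm
    · apply ciSup_le
      intro σ
      rw [key σ, if_pos hx]
      cases h : σ x <;> simp [h] <;> linarith
    · have hb : BddAbove (Set.range fun σ : Config ι =>
          lam * cnt Λ (flipAt σ x) - lam * cnt Λ σ) := by
        refine ⟨lam, ?_⟩
        rintro _ ⟨σ, rfl⟩
        simp only []
        rw [key σ, if_pos hx]
        cases h : σ x <;> simp [h] <;> linarith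
      have := le_ciSup hb (fun _ => false)
      simpa [key, hx] using this
  · rw [if_neg hx]
    have : ∀ σ : Config ι, lam * cnt Λ (flipAt σ x) - lam * cnt Λ σ = 0 := by
      intro σ; rw [key σ, if_neg hx, mul_zero]
    simp only [this]
    exact ciSup_const

lemma oscNormSq_cnt (lam : ℝ) (hlam : 0 ≤ lam) (Λ : Finset ι) :
    oscNormSq (fun σ => lam * cnt Λ σ) = (Λ.card : ℝ) * lam ^ 2 := by
  unfold oscNormSq
  rw [tsum_eq_sum (s := Λ) (f := fun x => osc (fun σ => lam * cnt Λ σ) x ^ 2)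
    (fun b hb => by rw [osc_cnt lam hlam, if_neg hb]; ring)]
  rw [Finset.sum_congr rfl (fun y hy => by rw [osc_cnt lam hlam, if_pos hy])]
  rw [Finset.sum_const, nsmul_eq_mul]


lemma measurableSet_site {ι : Type*} (x : ι) :
    MeasurableSet {σ : Config ι | σ x = true} := by
  have h : {σ : Config ι | σ x = true} = (fun σ : Config ι => σ x) ⁻¹' {true} := rfl
  rw [h]
  exact measurable_pi_apply x (measurableSet_singleton true)

section Meas
variable {ι : Type*} [DecidableEq ι]

lemma measurable_cnt {ι : Type*} [DecidableEq ι] (Λ : Finset ι) : Measurable (cnt Λ) := by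
  unfold cnt
  exact Finset.measurable_sum _ fun y _ =>
    Measurable.ite (measurableSet_site y) measurable_const measurable_const

lemma cnt_nonneg {ι : Type*} [DecidableEq ι] (Λ : Finset ι) (σ : Config ι) : 0 ≤ cnt Λ σ :=
  Finset.sum_nonneg fun y _ => by positivity

lemma cnt_le {ι : Type*} [DecidableEq ι] (Λ : Finset ι) (σ : Config ι) : cnt Λ σ ≤ (Λ.card : ℝ) := by
  unfold cnt
  calc ∑ y ∈ Λ, (if σ y then (1:ℝ) else 0) ≤ ∑ y ∈ Λ, (1:ℝ) :=
        Finset.sum_le_sum fun y _ => by split <;> norm_num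
    _ = (Λ.card : ℝ) := by simp

lemma integral_cnt {ι : Type*} [DecidableEq ι] (μ : Measure (Config ι)) [IsProbabilityMeasure μ] (Λ : Finset ι) :
    ∫ σ, cnt Λ σ ∂μ = ∑ y ∈ Λ, (μ {σ : Config ι | σ y = true}).toReal := by
  unfold cnt
  have hrw : ∀ y : ι, (fun σ : Config ι => if σ y then (1:ℝ) else 0)
      = Set.indicator {σ : Config ι | σ y = true} (fun _ => (1:ℝ)) := by
    intro y; funext σ; simp [Set.indicator_apply, Set.mem_setOf_eq]
  rw [integral_finset_sum _ (fun y _ => by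
    rw [hrw y]; exact (integrable_const (1:ℝ)).indicator (measurableSet_site y))]
  refine Finset.sum_congr rfl fun y _ => ?_
  rw [hrw y, integral_indicator_const (1:ℝ) (measurableSet_site y), smul_eq_mul, mul_one]
  rfl

lemma eq_dirac_of_sites {ι : Type*} [Countable ι] (μ : Measure (Config ι))
    [IsProbabilityMeasure μ]
    (h : ∀ x : ι, μ {σ : Config ι | σ x = true} = 1) :
    μ = Measure.dirac (fun _ => true) := by
  set a : Config ι := fun _ => true with ha
  have hsing : ({a} : Set (Config ι)) = ⋂ x : ι, {σ : Config ι | σ x = true} := by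
    ext σ
    simp only [Set.mem_singleton_iff, Set.mem_iInter, Set.mem_setOf_eq, ha, funext_iff]
  have hμa : μ {a} = 1 := by
    rw [hsing]
    have hcompl : μ (⋂ x : ι, {σ : Config ι | σ x = true})ᶜ = 0 := by
      rw [Set.compl_iInter]
      exact measure_iUnion_null fun x => by
        rw [prob_compl_eq_zero_iff (measurableSet_site x)]
        exact h x
    have hm : MeasurableSet (⋂ x : ι, {σ : Config ι | σ x = true}) :=
      MeasurableSet.iInter fun x => measurableSet_site x
    rw [← prob_compl_eq_zero_iff hm]
    exact hcompl
  refine Measure.ext fun s hs => ?_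
  rw [Measure.dirac_apply' a hs]
  by_cases has : a ∈ s
  · rw [Set.indicator_of_mem has, Pi.one_apply]
    refine le_antisymm prob_le_one ?_
    calc (1:ℝ≥0∞) = μ {a} := hμa.symm
      _ ≤ μ s := measure_mono (Set.singleton_subset_iff.2 has)
  · rw [Set.indicator_of_notMem has]
    have : s ⊆ ({a} : Set (Config ι))ᶜ := fun σ hσ => by
      simp only [Set.mem_compl_iff, Set.mem_singleton_iff]
      rintro rfl; exact has hσ
    refine le_antisymm ?_ zero_le
    calc μ s ≤ μ ({a} : Set (Config ι))ᶜ := measure_mono this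
      _ = 0 := by
          rw [measure_compl (by exact measurableSet_singleton a) (measure_ne_top μ _),
            hμa, measure_univ]
          simp

lemma measurable_shift {d : ℕ} (a : Site d) : Measurable (shift a) :=
  measurable_pi_lambda _ fun x => measurable_pi_apply (x + a)

lemma measure_site_eq {d : ℕ} (μ : Measure (Config (Site d))) (hTI : TransInv μ)
    (x : Site d) :
    μ {σ : Config (Site d) | σ x = true} = μ {σ : Config (Site d) | σ 0 = true} := by
  have hpre : (shift x)⁻¹' {σ : Config (Site d) | σ 0 = true}
      = {σ : Config (Site d) | σ x = true} := by
    ext σ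
    simp only [Set.mem_preimage, Set.mem_setOf_eq, shift, zero_add]
  calc μ {σ : Config (Site d) | σ x = true}
      = μ ((shift x)⁻¹' {σ : Config (Site d) | σ 0 = true}) := by rw [hpre]
    _ = (μ.map (shift x)) {σ : Config (Site d) | σ 0 = true} :=
        (Measure.map_apply (measurable_shift x) (measurableSet_site 0)).symm
    _ = μ {σ : Config (Site d) | σ 0 = true} := by rw [hTI x]


set_option maxHeartbeats 1000000 in
/-- let `μ` be a translation-invariant invariant measure of a PCA
(e.g. Toom's or Stavskaya's model with totally asymmetric noise) satisfying the
lower bound `μ(+_{C_n}) ≥ e^{-c n^{d-1}}` on the probability of seeing all `+`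
spins in the cube `C_n`. If `μ ≠ δ_+`, then `μ` does not satisfy `GCB(C)` for
any `C > 0`. -/
theorem toom_invariant_measure_no_gcb {d : ℕ} (hd : 1 ≤ d) (P : PCA d)
    (μ : Measure (Config (Site d))) [IsProbabilityMeasure μ]
    (hstat : Pmeas P μ = μ) (hTI : TransInv μ) (c : ℝ) (hc : 0 < c)
    (hlb : ∀ n : ℕ,
      ENNReal.ofReal (Real.exp (-c * (n : ℝ) ^ (d - 1))) ≤
        μ (cyl (cube d n) (fun _ => true)))
    (hne : μ ≠ Measure.dirac (fun _ => true)) :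
    ∀ C : ℝ, 0 < C → ¬ GCB μ C := by
  
  intro C hC hGCB
  classical
  -- the single-site marginal probability
  set p : ℝ := (μ {σ : Config (Site d) | σ 0 = true}).toReal with hp
  have hp0 : 0 ≤ p := ENNReal.toReal_nonneg
  have hple : p ≤ 1 := by
    have h1 : μ {σ : Config (Site d) | σ 0 = true} ≤ 1 := prob_le_one
    have := ENNReal.toReal_mono (by simp) h1
    simpa [← hp] using this
  have hplt : p < 1 := by
    rcases lt_or_ge p 1 with h | h
    · exact h
    · exfalso
      have hpe : p = 1 := le_antisymm hple h
      have h1 : μ {σ : Config (Site d) | σ 0 = true} = 1 := by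
        rw [hp] at hpe
        exact (ENNReal.toReal_eq_one_iff _).mp hpe
      exact hne (eq_dirac_of_sites μ fun x => by
        rw [measure_site_eq μ hTI x]; exact h1)
  set θ : ℝ := 1 - p with hθdef
  have hθ : 0 < θ := by simp only [hθdef]; linarith
  set lam : ℝ := θ / C with hlamdef
  have hlam : 0 < lam := div_pos hθ hC
  -- choice of the box size
  set n : ℕ := ⌈2 * C * c / θ ^ 2⌉₊ + 1 with hn
  have hnpos : 0 < n := by omega
  have hnR : (0:ℝ) < (n:ℝ) := by exact_mod_cast hnpos
  have hngt : 2 * C * c / θ ^ 2 < (n:ℝ) := by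
    have h1 : 2 * C * c / θ ^ 2 ≤ (⌈2 * C * c / θ ^ 2⌉₊ : ℝ) := Nat.le_ceil _
    have h2 : ((⌈2 * C * c / θ ^ 2⌉₊ : ℕ) : ℝ) < (n:ℝ) := by
      rw [hn]; push_cast; linarith
    linarith
  set Λ : Finset (Site d) := cube d n with hΛ
  set Nr : ℝ := (Λ.card : ℝ) with hNr
  have hNr0 : 0 ≤ Nr := by rw [hNr]; positivity
  have hcard : Λ.card = (2 * n + 1) ^ d := by
    rw [hΛ]
    unfold cube
    rw [Fintype.card_piFinset]
    have h1 : (Finset.Icc (-(n:ℤ)) (n:ℤ)).card = 2 * n + 1 := by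
      rw [Int.card_Icc]; omega
    simp [h1]
  have hNge : ((n:ℝ)) ^ d ≤ Nr := by
    rw [hNr, hcard]
    exact_mod_cast Nat.pow_le_pow_left (by omega) d
  clear_value n Λ Nr
  set A : Set (Config (Site d)) := cyl Λ (fun _ => true) with hA
  have hAm : MeasurableSet A := by
    have h1 : A = ⋂ x ∈ Λ, {σ : Config (Site d) | σ x = true} := by
      ext σ; simp [hA, cyl, Set.mem_iInter]
    rw [h1]
    exact MeasurableSet.biInter Λ.countable_toSet fun x _ => measurableSet_site x
  -- the local function
  have hfloc : IsLocal (fun σ : Config (Site d) => lam * cnt Λ σ) := by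
    refine ⟨Λ, fun σ τ h => ?_⟩
    simp only [cnt]
    rw [Finset.sum_congr rfl fun y hy => by rw [h y hy]]
  have hintcnt : ∫ σ, cnt Λ σ ∂μ = Nr * p := by
    rw [integral_cnt μ Λ,
      Finset.sum_congr rfl fun y _ => by rw [measure_site_eq μ hTI y],
      Finset.sum_const, nsmul_eq_mul, ← hp, ← hNr]
  have hEf : (∫ τ, lam * cnt Λ τ ∂μ) = lam * (Nr * p) := by
    rw [integral_const_mul, hintcnt]
  have hlog := hGCB _ hfloc
  simp only [oscNormSq_cnt lam hlam.le Λ, hEf, ← hNr] at hlog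
  -- integrability and positivity of the exponential moment
  have hgmeas : Measurable (fun σ : Config (Site d) =>
      Real.exp (lam * cnt Λ σ - lam * (Nr * p))) :=
    (((measurable_cnt Λ).const_mul lam).sub measurable_const).exp
  have hgint : Integrable
      (fun σ : Config (Site d) => Real.exp (lam * cnt Λ σ - lam * (Nr * p))) μ := by
    refine ⟨hgmeas.aestronglyMeasurable, ?_⟩
    apply HasFiniteIntegral.of_bounded (C := Real.exp (lam * Nr))
    filter_upwards with σ
    rw [Real.norm_eq_abs, abs_of_pos (Real.exp_pos _)]
    apply Real.exp_le_exp.mpr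
    have h1 := cnt_le Λ σ
    rw [← hNr] at h1
    have h2 : lam * cnt Λ σ ≤ lam * Nr := mul_le_mul_of_nonneg_left h1 hlam.le
    have h3 : 0 ≤ lam * (Nr * p) :=
      mul_nonneg hlam.le (mul_nonneg hNr0 hp0)
    linarith
  have hgpos : 0 < ∫ σ, Real.exp (lam * cnt Λ σ - lam * (Nr * p)) ∂μ := by
    have hglb : ∀ σ : Config (Site d), Real.exp (-(lam * (Nr * p)))
        ≤ Real.exp (lam * cnt Λ σ - lam * (Nr * p)) := fun σ =>
      Real.exp_le_exp.mpr (by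
        have h3 : 0 ≤ lam * cnt Λ σ := mul_nonneg hlam.le (cnt_nonneg Λ σ)
        linarith)
    have h2 := integral_mono (integrable_const _) hgint hglb
    rw [integral_const, measureReal_def, measure_univ, ENNReal.toReal_one, one_smul] at h2
    exact lt_of_lt_of_le (Real.exp_pos _) h2
  have hub : ∫ σ, Real.exp (lam * cnt Λ σ - lam * (Nr * p)) ∂μ
      ≤ Real.exp (C / 2 * (Nr * lam ^ 2)) := by
    rw [← Real.exp_log hgpos]
    exact Real.exp_le_exp.mpr hlog
  -- Chernoff / Markov step
  have hcntA : ∀ σ ∈ A, cnt Λ σ = Nr := by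
    intro σ hσ
    unfold cnt
    rw [Finset.sum_congr rfl fun y hy => if_pos (hσ y hy)]
    simp [hNr]
  have hpt : ∀ σ : Config (Site d),
      A.indicator (fun _ => Real.exp (lam * (θ * Nr))) σ
        ≤ Real.exp (lam * cnt Λ σ - lam * (Nr * p)) := by
    intro σ
    by_cases hσ : σ ∈ A
    · rw [Set.indicator_of_mem hσ]
      apply Real.exp_le_exp.mpr
      rw [hcntA σ hσ]
      apply le_of_eq
      rw [hθdef]; ring
    · rw [Set.indicator_of_notMem hσ]
      exact (Real.exp_pos _).le
  have hmark : Real.exp (lam * (θ * Nr)) * (μ A).toReal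
      ≤ ∫ σ, Real.exp (lam * cnt Λ σ - lam * (Nr * p)) ∂μ := by
    have h2 := integral_mono ((integrable_const _).indicator hAm) hgint hpt
    rwa [integral_indicator_const _ hAm, smul_eq_mul, mul_comm] at h2
  -- the lower bound
  have hlow : Real.exp (-c * (n:ℝ) ^ (d - 1)) ≤ (μ A).toReal := by
    have h1 := hlb n
    rw [← hΛ] at h1
    have h2 := ENNReal.toReal_mono (measure_ne_top μ _) h1
    rw [ENNReal.toReal_ofReal (Real.exp_pos _).le] at h2
    exact h2
  -- combining
  have hchain : Real.exp (lam * (θ * Nr) + -c * (n:ℝ) ^ (d - 1))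
      ≤ Real.exp (C / 2 * (Nr * lam ^ 2)) := by
    rw [Real.exp_add]
    calc Real.exp (lam * (θ * Nr)) * Real.exp (-c * (n:ℝ) ^ (d - 1))
        ≤ Real.exp (lam * (θ * Nr)) * (μ A).toReal :=
          mul_le_mul_of_nonneg_left hlow (Real.exp_pos _).le
      _ ≤ ∫ σ, Real.exp (lam * cnt Λ σ - lam * (Nr * p)) ∂μ := hmark
      _ ≤ _ := hub
  have hexp : lam * (θ * Nr) + -c * (n:ℝ) ^ (d - 1) ≤ C / 2 * (Nr * lam ^ 2) :=
    Real.exp_le_exp.mp hchain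
  -- final numerics
  set m : ℝ := (n:ℝ) ^ (d - 1) with hm
  have hmpos : 0 < m := by rw [hm]; positivity
  have e1 : lam * (θ * Nr) = θ ^ 2 * Nr / C := by
    rw [hlamdef]; field_simp
  have e2 : C / 2 * (Nr * lam ^ 2) = θ ^ 2 * Nr / (2 * C) := by
    rw [hlamdef]; field_simp
  rw [e1, e2] at hexp
  have e3 : θ ^ 2 * Nr / C - θ ^ 2 * Nr / (2 * C) = θ ^ 2 * Nr / (2 * C) := by
    field_simp; ring
  have h4 : θ ^ 2 * Nr / (2 * C) ≤ c * m := by linarith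
  have h5 : θ ^ 2 * Nr ≤ c * m * (2 * C) := (div_le_iff₀ (by positivity)).mp h4
  have h6 : (n:ℝ) * m ≤ Nr := by
    have h7 : ((n:ℝ)) ^ d = (n:ℝ) * m := by
      rw [hm, ← pow_succ']
      congr 1
      omega
    rw [← h7]
    exact hNge
  have h8 : θ ^ 2 * ((n:ℝ) * m) ≤ θ ^ 2 * Nr :=
    mul_le_mul_of_nonneg_left h6 (sq_nonneg θ)
  have h9 : θ ^ 2 * (n:ℝ) ≤ 2 * C * c := by
    have h10 : (θ ^ 2 * (n:ℝ)) * m ≤ (2 * C * c) * m := by linarith [h8, h5]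
    exact le_of_mul_le_mul_right h10 hmpos
  have h11 : (n:ℝ) ≤ 2 * C * c / θ ^ 2 := by
    rw [le_div_iff₀ (by positivity)]
    linarith [h9]
  linarith
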